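/- Every graph in the family F_1 is 4-χρ-vertex-critical; that is, for every integer l ≥ 0 with l ≢ 3 (mod 4), the graph G obtained from two disjoint triangles by joining a vertex of one triangle to a vertex of the other triangle by a path with exactly l internal vertices satisfies χρ(G) = 4 and χρ(G − v) < 4 for every vertex v. -/

import Mathlib

open SimpleGraph

/-- A `k`-packing coloring of `G`: colors in `{1,…,k}` and distinct vertices of equal color `i`
are at (extended, shortest-path) distance greater than `i`. -/
def IsPackingColoring {V : Type*} (G : SimpleGraph V) (k : ℕ) (c : V → ℕ) : Prop :=
  (∀ v, 1 ≤ c v ∧ c v ≤ k) ∧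
    ∀ u v : V, u ≠ v → c u = c v → (c u : ℕ∞) < G.edist u v

/-- The packing chromatic number of `G`: the least `k` admitting a `k`-packing coloring. -/
noncomputable def packingChromaticNumber {V : Type*} (G : SimpleGraph V) : ℕ :=
  sInf {k | ∃ c : V → ℕ, IsPackingColoring G k c}

/-- `G` is `4`-`χρ`-vertex-critical: `χρ(G) = 4` and deleting any vertex drops `χρ` below `4`. -/
def FourVertexCritical {V : Type*} (G : SimpleGraph V) : Prop :=
  packingChromaticNumber G = 4 ∧
    ∀ v : V, packingChromaticNumber (G.induce ({v}ᶜ : Set V)) < 4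

/-- `G` contains a (not necessarily induced) subgraph isomorphic to `H`. -/
def HasCopy {W V : Type*} (H : SimpleGraph W) (G : SimpleGraph V) : Prop :=
  ∃ f : H →g G, Function.Injective f

/-- The cycle on `n` vertices (for `n ≥ 3`). -/
def CycGraph (n : ℕ) : SimpleGraph (Fin n) :=
  SimpleGraph.fromRel (fun i j => (i.val + 1) % n = j.val)

/-- A member of the family `𝓕₁`: two triangles `{0,1,2}` and `{l+3,l+4,l+5}` joined by a
path from `u = 2` to `v = l+3` with `l` internal vertices `3,…,l+2`. -/
def F1Graph (l : ℕ) : SimpleGraph (Fin (l + 6)) :=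
  SimpleGraph.fromRel (fun i j =>
    j.val = i.val + 1 ∨ (i.val = 0 ∧ j.val = 2) ∨ (i.val = l + 3 ∧ j.val = l + 5))

/-- A member of the family `𝓕₂`: a triangle `{0,1,2}` joined by a path from `u = 2` to
`v = l+3` with `l` internal vertices `3,…,l+2`, where `v` is the middle vertex of the path
`(l+4)-(l+3)-(l+5)`. -/
def F2Graph (l : ℕ) : SimpleGraph (Fin (l + 6)) :=
  SimpleGraph.fromRel (fun i j =>
    (j.val = i.val + 1 ∧ j.val ≤ l + 4) ∨ (i.val = 0 ∧ j.val = 2) ∨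
      (i.val = l + 3 ∧ j.val = l + 5))

/-- A member of the family `𝓕₃`: `A` is the path `0-1-2-3` (plus the edge `0-3` if
`c4 = true`, making it a 4-cycle) with non-pendant vertex `u = 2`, joined by a path with `l`
internal vertices `4,…,l+3` to the vertex `v = l+4` of the triangle `{l+4,l+5,l+6}`. -/
def F3Graph (c4 : Bool) (l : ℕ) : SimpleGraph (Fin (l + 7)) :=
  SimpleGraph.fromRel (fun i j =>
    (j.val = i.val + 1 ∧ i.val ≠ 3) ∨ (i.val = 2 ∧ j.val = 4) ∨
      (c4 = true ∧ i.val = 0 ∧ j.val = 3) ∨ (i.val = l + 4 ∧ j.val = l + 6))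

/-- A member of the family `𝓕₄`: paths `u₁(0)-u(1)-u₂(l+5+l')` and
`z₁(l+4+l')-z(l+3+l')-z₂(l+7+l')`, an edge `v(l+2)-v₁(l+6+l')`, with `u` joined to `v` by a
path through internal vertices `y₁(2),…,y_l(l+1)` and `v` joined to `z` by a path through
internal vertices `w₁(l+3),…,w_{l'}(l+2+l')`; if `e = 1` the extra edge `v₁ y_{l-1}` is
present, and if `e = 2` the extra edge `v₁ w₂` is present. -/
def F4Graph (l l' : ℕ) (e : Fin 3) : SimpleGraph (Fin (l + l' + 8)) :=
  SimpleGraph.fromRel (fun i j =>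
    (j.val = i.val + 1 ∧ j.val ≤ l + 4 + l') ∨ (i.val = 1 ∧ j.val = l + 5 + l') ∨
      (i.val = l + 2 ∧ j.val = l + 6 + l') ∨ (i.val = l + 3 + l' ∧ j.val = l + 7 + l') ∨
      (e = 1 ∧ i.val = l ∧ j.val = l + 6 + l') ∨
      (e = 2 ∧ i.val = l + 4 ∧ j.val = l + 6 + l'))

/-- A member of the family `𝓕₅`: `A` is the path `0-1-2-3` (plus edge `0-3` if `ac4 = true`)
with non-pendant vertex `u = 2`, `B` is the path `(l+5)-(l+4)-(l+6)-(l+7)` (plus edge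
`(l+5)-(l+7)` if `bc4 = true`) with non-pendant vertex `v = l+4`, and `u` is joined to `v`
by a path with `l` internal vertices `4,…,l+3`. -/
def F5Graph (ac4 bc4 : Bool) (l : ℕ) : SimpleGraph (Fin (l + 8)) :=
  SimpleGraph.fromRel (fun i j =>
    (j.val = i.val + 1 ∧ i.val ≠ 3 ∧ i.val ≠ l + 5) ∨ (i.val = 2 ∧ j.val = 4) ∨
      (i.val = l + 4 ∧ j.val = l + 6) ∨ (ac4 = true ∧ i.val = 0 ∧ j.val = 3) ∨
      (bc4 = true ∧ i.val = l + 5 ∧ j.val = l + 7))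

namespace F1Aux
open SimpleGraph

def pos (l i : ℕ) : ℕ := min (max i 1) (l+4)
def dd (l i j : ℕ) : ℕ := max (max (pos l i - pos l j) (pos l j - pos l i)) 1

variable {l : ℕ}

lemma adj_iff {u v : Fin (l+6)} : (F1Graph l).Adj u v ↔ u.val ≠ v.val ∧
    (v.val = u.val + 1 ∨ u.val = v.val + 1 ∨ (u.val = 0 ∧ v.val = 2) ∨ (v.val = 0 ∧ u.val = 2)
      ∨ (u.val = l+3 ∧ v.val = l+5) ∨ (v.val = l+3 ∧ u.val = l+5)) := by
  rw [F1Graph, fromRel_adj, Ne, Ne, Fin.ext_iff]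
  tauto

lemma adj_mk {a b : ℕ} (ha : a < l+6) (hb : b < l+6)
    (h : b = a + 1 ∨ (a = 0 ∧ b = 2) ∨ (a = l+3 ∧ b = l+5)) :
    (F1Graph l).Adj ⟨a, ha⟩ ⟨b, hb⟩ := by
  rw [adj_iff]
  simp only [Fin.val_mk]
  omega

lemma edist_adj_le {a b : ℕ} (ha : a < l+6) (hb : b < l+6)
    (h : b = a + 1 ∨ (a = 0 ∧ b = 2) ∨ (a = l+3 ∧ b = l+5)) :
    (F1Graph l).edist ⟨a, ha⟩ ⟨b, hb⟩ ≤ 1 :=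
  le_of_eq (edist_eq_one_iff_adj.mpr (adj_mk ha hb h))

lemma edist_chain : ∀ (k a b : ℕ) (ha : a < l+6) (hb : b < l+6), a + k = b →
    (F1Graph l).edist ⟨a, ha⟩ ⟨b, hb⟩ ≤ k := by
  intro k
  induction k with
  | zero =>
    intro a b ha hb hab
    have : a = b := by omega
    subst this
    simp [edist_self]
  | succ n ih =>
    intro a b ha hb hab
    have ha1 : a + 1 < l + 6 := by omega
    calc (F1Graph l).edist ⟨a, ha⟩ ⟨b, hb⟩
        ≤ (F1Graph l).edist ⟨a, ha⟩ ⟨a+1, ha1⟩ + (F1Graph l).edist ⟨a+1, ha1⟩ ⟨b, hb⟩ :=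
          SimpleGraph.edist_triangle
      _ ≤ 1 + n := add_le_add (edist_adj_le _ _ (by omega)) (ih (a+1) b ha1 hb (by omega))
      _ = (n+1 : ℕ) := by push_cast; ring
lemma pos_lipschitz {u v : Fin (l+6)} (h : (F1Graph l).Adj u v) :
    pos l u.val ≤ pos l v.val + 1 ∧ pos l v.val ≤ pos l u.val + 1 := by
  rw [adj_iff] at h
  have hu := u.isLt
  have hv := v.isLt
  simp only [pos]
  obtain ⟨hne, h|h|h|h|h|h⟩ := h <;> omega

lemma walk_pos_bound {u v : Fin (l+6)} (p : (F1Graph l).Walk u v) :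
    pos l u.val ≤ pos l v.val + p.length ∧ pos l v.val ≤ pos l u.val + p.length := by
  induction p with
  | nil => simp
  | cons h q ih =>
    have := pos_lipschitz h
    rw [SimpleGraph.Walk.length_cons]
    omega

lemma dd_le_edist {u v : Fin (l+6)} (h : u ≠ v) :
    (dd l u.val v.val : ℕ∞) ≤ (F1Graph l).edist u v := by
  rw [edist_eq_sInf]
  refine le_sInf ?_
  rintro x ⟨p, rfl⟩
  have h1 := walk_pos_bound p
  have h2 : 1 ≤ p.length := by
    cases p with
    | nil => exact absurd rfl h
    | cons h q => simp [SimpleGraph.Walk.length_cons]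
  have : dd l u.val v.val ≤ p.length := by simp only [dd]; omega
  simpa using (Nat.cast_le (α := ℕ∞)).mpr this

lemma edist_le_dd' {a b : ℕ} (ha : a < l+6) (hb : b < l+6) (hab : a ≤ b) :
    (F1Graph l).edist ⟨a, ha⟩ ⟨b, hb⟩ ≤ dd l a b := by
  rcases eq_or_lt_of_le hab with rfl | hlt
  · simp [edist_self]
  rcases Nat.eq_zero_or_pos a with rfl | hapos
  · -- a = 0
    rcases eq_or_ne b 1 with rfl | hb1
    · have : dd l 0 1 = 1 := by simp only [dd, pos]; omega
      rw [this]
      exact edist_adj_le _ _ (by omega)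
    rcases eq_or_ne b (l+5) with rfl | hbl5
    · have h2 : (2:ℕ) < l + 6 := by omega
      have h3 : l+3 < l + 6 := by omega
      have hdd : dd l 0 (l+5) = l+3 := by simp only [dd, pos]; omega
      rw [hdd]
      calc (F1Graph l).edist ⟨0, ha⟩ ⟨l+5, hb⟩
          ≤ (F1Graph l).edist ⟨0, ha⟩ ⟨2, h2⟩ + (F1Graph l).edist ⟨2, h2⟩ ⟨l+5, hb⟩ :=
            SimpleGraph.edist_triangle
        _ ≤ (F1Graph l).edist ⟨0, ha⟩ ⟨2, h2⟩ +
              ((F1Graph l).edist ⟨2, h2⟩ ⟨l+3, h3⟩ + (F1Graph l).edist ⟨l+3, h3⟩ ⟨l+5, hb⟩) :=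
            add_le_add le_rfl SimpleGraph.edist_triangle
        _ ≤ 1 + ((l+1 : ℕ) + 1) := by
            refine add_le_add (edist_adj_le _ _ (by omega)) (add_le_add ?_ ?_)
            · exact edist_chain (l+1) 2 (l+3) h2 h3 (by omega)
            · exact edist_adj_le _ _ (by omega)
        _ = (l+3 : ℕ) := by push_cast; ring
    · -- 2 ≤ b ≤ l+4
      have hble : b ≤ l + 4 := by omega
      have hb2 : 2 ≤ b := by omega
      have h2 : (2:ℕ) < l + 6 := by omega
      have hdd : dd l 0 b = b - 1 := by simp only [dd, pos]; omega
      rw [hdd]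
      calc (F1Graph l).edist ⟨0, ha⟩ ⟨b, hb⟩
          ≤ (F1Graph l).edist ⟨0, ha⟩ ⟨2, h2⟩ + (F1Graph l).edist ⟨2, h2⟩ ⟨b, hb⟩ :=
            SimpleGraph.edist_triangle
        _ ≤ 1 + ((b-2 : ℕ)) := add_le_add (edist_adj_le _ _ (by omega))
            (edist_chain (b-2) 2 b h2 hb (by omega))
        _ = ((b-1 : ℕ)) := by
            have : (1:ℕ∞) + (b-2:ℕ) = ((1 + (b-2) : ℕ)) := by push_cast; ring
            rw [this]
            congr 1
            omega
  · -- 1 ≤ a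
    rcases eq_or_ne b (l+5) with rfl | hbl5
    · rcases eq_or_ne a (l+4) with rfl | hal4
      · have : dd l (l+4) (l+5) = 1 := by simp only [dd, pos]; omega
        rw [this]
        exact edist_adj_le _ _ (by omega)
      · have hale : a ≤ l+3 := by omega
        have h3 : l+3 < l + 6 := by omega
        have hdd : dd l a (l+5) = l+4-a := by simp only [dd, pos]; omega
        rw [hdd]
        calc (F1Graph l).edist ⟨a, ha⟩ ⟨l+5, hb⟩
            ≤ (F1Graph l).edist ⟨a, ha⟩ ⟨l+3, h3⟩ + (F1Graph l).edist ⟨l+3, h3⟩ ⟨l+5, hb⟩ :=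
              SimpleGraph.edist_triangle
          _ ≤ ((l+3-a : ℕ)) + 1 := add_le_add (edist_chain (l+3-a) a (l+3) ha h3 (by omega))
              (edist_adj_le _ _ (by omega))
          _ = ((l+4-a : ℕ)) := by
              have : ((l+3-a:ℕ) : ℕ∞) + 1 = (((l+3-a) + 1 : ℕ)) := by push_cast; ring
              rw [this]
              congr 1
              omega
    · have hble : b ≤ l + 4 := by omega
      have hdd : dd l a b = b - a := by simp only [dd, pos]; omega
      rw [hdd]
      exact edist_chain (b-a) a b ha hb (by omega)

lemma dd_comm (l a b : ℕ) : dd l a b = dd l b a := by simp [dd]; omega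

lemma edist_le_dd {u v : Fin (l+6)} :
    (F1Graph l).edist u v ≤ dd l u.val v.val := by
  rcases le_total u.val v.val with h | h
  · have := edist_le_dd' u.isLt v.isLt h
    simpa using this
  · have := edist_le_dd' v.isLt u.isLt h
    rw [edist_comm, dd_comm]
    simpa using this

lemma edist_eq {u v : Fin (l+6)} (h : u ≠ v) :
    (F1Graph l).edist u v = dd l u.val v.val :=
  le_antisymm edist_le_dd (dd_le_edist h)
section Sep
variable {W : Type*} {H : SimpleGraph W} {g : W → Prop}

lemma walk_sep (hsep : ∀ a b, H.Adj a b → (g a ↔ g b)) {u v : W} (p : H.Walk u v) :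
    g u ↔ g v := by
  induction p with
  | nil => exact Iff.rfl
  | cons h q ih => exact (hsep _ _ h).trans ih

lemma edist_top_of_sep (hsep : ∀ a b, H.Adj a b → (g a ↔ g b)) {u v : W}
    (hne : ¬ (g u ↔ g v)) : H.edist u v = ⊤ :=
  SimpleGraph.edist_eq_top_of_not_reachable fun hr => hr.elim fun p => hne (walk_sep hsep p)

end Sep

lemma edist_val_le_induce {V : Type*} {G : SimpleGraph V} {s : Set V} (u v : s) :
    G.edist u.1 v.1 ≤ (G.induce s).edist u v := by
  rw [edist_eq_sInf (G := G.induce s)]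
  refine le_sInf ?_
  rintro x ⟨p, rfl⟩
  have := SimpleGraph.edist_le (p.map (SimpleGraph.Embedding.induce s).toHom)
  rw [SimpleGraph.Walk.length_map] at this
  exact this

/-- build an `IsPackingColoring` of `F1Graph l` from a `dd`-based certificate -/
lemma build {k : ℕ} {c : Fin (l+6) → ℕ} (hb : ∀ v, 1 ≤ c v ∧ c v ≤ k)
    (hd : ∀ u v : Fin (l+6), u ≠ v → c u = c v → c u < dd l u.val v.val) :
    IsPackingColoring (F1Graph l) k c := by
  refine ⟨hb, fun u v hne heq => ?_⟩
  rw [edist_eq hne]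
  exact_mod_cast hd u v hne heq

/-- in the induced graph, a `dd`-certificate also lower-bounds edist -/
lemma lt_induce_edist {v0 : Fin (l+6)} {u u' : ({v0}ᶜ : Set (Fin (l+6)))}
    (hne : u ≠ u') {m : ℕ} (hm : m < dd l u.1.val u'.1.val) :
    (m : ℕ∞) < ((F1Graph l).induce ({v0}ᶜ : Set (Fin (l+6)))).edist u u' := by
  have h1 : u.1 ≠ u'.1 := fun h => hne (Subtype.ext h)
  calc (m : ℕ∞) < (dd l u.1.val u'.1.val : ℕ) := by exact_mod_cast hm
    _ = (F1Graph l).edist u.1 u'.1 := (edist_eq h1).symm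
    _ ≤ _ := edist_val_le_induce u u'
/-- the periodic pattern by position: 1 at odd, 2 at ≡2 mod 4, 3 at ≡0 mod 4 -/
def pat4 (p : ℕ) : ℕ := if p % 2 = 1 then 1 else if p % 4 = 2 then 2 else 3

def cMain (l : ℕ) : Fin (l+6) → ℕ := fun u =>
  if u.val = 1 then 4 else if u.val = l+4 then 4 else pat4 (pos l u.val)

set_option maxHeartbeats 1000000 in
lemma exists4 (l : ℕ) : ∃ c : Fin (l+6) → ℕ, IsPackingColoring (F1Graph l) 4 c := by
  match l with
  | 0 =>
    refine ⟨![2,3,1,4,1,2], build ?_ ?_⟩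
    · intro v; revert v; decide
    · decide
  | 1 =>
    refine ⟨![2,3,1,4,1,3,2], build ?_ ?_⟩
    · intro v; revert v; decide
    · decide
  | (n+2) =>
    refine ⟨cMain (n+2), build ?_ ?_⟩
    · intro v
      simp only [cMain, pat4]
      split_ifs <;> omega
    · intro u v huv heq
      have hu := u.isLt
      have hv := v.isLt
      have hne : u.val ≠ v.val := fun h => huv (Fin.ext h)
      simp only [cMain, pat4] at heq ⊢
      simp only [dd]
      have hpu : pos (n+2) u.val = min (max u.val 1) (n+2+4) := rfl
      have hpv : pos (n+2) v.val = min (max v.val 1) (n+2+4) := rfl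
      generalize pos (n+2) u.val = pu at *
      generalize pos (n+2) v.val = pv at *
      split_ifs at heq ⊢ <;> omega
set_option maxHeartbeats 2000000 in
lemma no3 (l : ℕ) (hl : l % 4 ≠ 3) (c : Fin (l+6) → ℕ)
    (hb : ∀ v, 1 ≤ c v ∧ c v ≤ 3)
    (hd : ∀ u v : Fin (l+6), u ≠ v → c u = c v → c u < dd l u.val v.val) : False := by
  classical
  set C : ℕ → ℕ := fun i => if h : i < l+6 then c ⟨i, h⟩ else 1 with hC
  have hb' : ∀ i, i < l+6 → 1 ≤ C i ∧ C i ≤ 3 := fun i hi => by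
    simpa only [hC, dif_pos hi] using hb ⟨i, hi⟩
  have hcon : ∀ i j m, i < l+6 → j < l+6 → i ≠ j → C i = m → C j = m → dd l i j ≤ m → False := by
    intro i j m hi hj hij h1 h2 hle
    have e1 : C i = c ⟨i, hi⟩ := dif_pos hi
    have e2 : C j = c ⟨j, hj⟩ := dif_pos hj
    have := hd ⟨i, hi⟩ ⟨j, hj⟩ (fun he => hij (by simpa [Fin.ext_iff] using he))
      (by rw [← e1, ← e2, h1, h2])
    simp only [Fin.val_mk] at this
    omega
  have tne : ∀ i j, i < l+6 → j < l+6 → i ≠ j → dd l i j = 1 → C i ≠ C j := by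
    intro i j hi hj hij hdd h
    exact hcon i j (C j) hi hj hij h rfl (by have := hb' j hj; omega)
  have hb0 := hb' 0 (by omega)
  have hb1 := hb' 1 (by omega)
  have hb2 := hb' 2 (by omega)
  have hb3 := hb' 3 (by omega)
  have t01 := tne 0 1 (by omega) (by omega) (by omega) (by simp only [dd, pos]; omega)
  have t02 := tne 0 2 (by omega) (by omega) (by omega) (by simp only [dd, pos]; omega)
  have t12 := tne 1 2 (by omega) (by omega) (by omega) (by simp only [dd, pos]; omega)
  have t23 := tne 2 3 (by omega) (by omega) (by omega) (by simp only [dd, pos]; omega)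
  -- C 2 ≠ 1 (for every l)
  have h21 : C 2 ≠ 1 := by
    intro h2'
    have h3 : C 3 = 2 ∨ C 3 = 3 := by omega
    have h01 : (C 0 = 2 ∧ C 1 = 3) ∨ (C 0 = 3 ∧ C 1 = 2) := by omega
    rcases h3 with h3 | h3 <;> rcases h01 with ⟨ha, hbb⟩ | ⟨ha, hbb⟩
    · exact hcon 3 0 2 (by omega) (by omega) (by omega) h3 ha (by simp only [dd, pos]; omega)
    · exact hcon 3 1 2 (by omega) (by omega) (by omega) h3 hbb (by simp only [dd, pos]; omega)
    · exact hcon 3 1 3 (by omega) (by omega) (by omega) h3 hbb (by simp only [dd, pos]; omega)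
    · exact hcon 3 0 3 (by omega) (by omega) (by omega) h3 ha (by simp only [dd, pos]; omega)
  obtain rfl | hl1 : l = 0 ∨ 1 ≤ l := by omega
  · -- l = 0 : two triangles joined by the edge 2-3
    have hb4 := hb' 4 (by omega)
    have hb5 := hb' 5 (by omega)
    have t34 := tne 3 4 (by omega) (by omega) (by omega) (by simp only [dd, pos]; omega)
    have t35 := tne 3 5 (by omega) (by omega) (by omega) (by simp only [dd, pos]; omega)
    have t45 := tne 4 5 (by omega) (by omega) (by omega) (by simp only [dd, pos]; omega)
    have h31 : C 3 ≠ 1 := by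
      intro h3'
      have h2 : C 2 = 2 ∨ C 2 = 3 := by omega
      have h45 : (C 4 = 2 ∧ C 5 = 3) ∨ (C 4 = 3 ∧ C 5 = 2) := by omega
      rcases h2 with h2 | h2 <;> rcases h45 with ⟨ha, hbb⟩ | ⟨ha, hbb⟩
      · exact hcon 2 4 2 (by omega) (by omega) (by omega) h2 ha (by simp only [dd, pos]; omega)
      · exact hcon 2 5 2 (by omega) (by omega) (by omega) h2 hbb (by simp only [dd, pos]; omega)
      · exact hcon 2 5 3 (by omega) (by omega) (by omega) h2 hbb (by simp only [dd, pos]; omega)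
      · exact hcon 2 4 3 (by omega) (by omega) (by omega) h2 ha (by simp only [dd, pos]; omega)
    have h03 : C 0 = C 3 ∨ C 1 = C 3 := by omega
    rcases h03 with h | h
    · exact hcon 0 3 (C 3) (by omega) (by omega) (by omega) h rfl (by simp only [dd, pos]; omega)
    · exact hcon 1 3 (C 3) (by omega) (by omega) (by omega) h rfl (by simp only [dd, pos]; omega)
  -- now l ≥ 1
  have hb4 := hb' 4 (by omega)
  have t34 := tne 3 4 (by omega) (by omega) (by omega) (by simp only [dd, pos]; omega)
  -- C 2 = 3
  have h2 : C 2 = 3 := by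
    rcases (by omega : C 2 = 2 ∨ C 2 = 3) with h2' | h2'
    · exfalso
      have h3 : C 3 = 1 := by
        rcases (by omega : C 3 = 1 ∨ C 3 = 3) with h | h
        · exact h
        exfalso
        rcases (by omega : C 0 = 3 ∨ C 1 = 3) with ha | ha
        · exact hcon 3 0 3 (by omega) (by omega) (by omega) h ha (by simp only [dd, pos]; omega)
        · exact hcon 3 1 3 (by omega) (by omega) (by omega) h ha (by simp only [dd, pos]; omega)
      have h4 : C 4 = 3 := by
        rcases (by omega : C 4 = 2 ∨ C 4 = 3) with h | h
        · exact absurd (hcon 4 2 2 (by omega) (by omega) (by omega) h h2'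
            (by simp only [dd, pos]; omega)) not_false
        · exact h
      rcases (by omega : C 0 = 3 ∨ C 1 = 3) with ha | ha
      · exact hcon 0 4 3 (by omega) (by omega) (by omega) ha h4 (by simp only [dd, pos]; omega)
      · exact hcon 1 4 3 (by omega) (by omega) (by omega) ha h4 (by simp only [dd, pos]; omega)
    · exact h2'
  have h012 : (C 0 = 1 ∧ C 1 = 2) ∨ (C 0 = 2 ∧ C 1 = 1) := by omega
  -- the look-ahead lemma
  have lemL : ∀ k, 2 ≤ k → k + 1 ≤ l + 3 → C k = 3 → C (k+1) = 2 → False := by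
    intro k hk2 hk h3 htwo
    have hbk2 := hb' (k+2) (by omega)
    have hbk3 := hb' (k+3) (by omega)
    have e1 : C (k+2) ≠ 2 := fun h => hcon (k+2) (k+1) 2 (by omega) (by omega) (by omega) h htwo
      (by simp only [dd, pos]; omega)
    have e2 : C (k+2) ≠ 3 := fun h => hcon (k+2) k 3 (by omega) (by omega) (by omega) h h3
      (by simp only [dd, pos]; omega)
    have e3 : C (k+2) = 1 := by omega
    have f1 : C (k+3) ≠ 1 := fun h => hcon (k+3) (k+2) 1 (by omega) (by omega) (by omega) h e3
      (by simp only [dd, pos]; omega)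
    have f2 : C (k+3) ≠ 2 := fun h => hcon (k+3) (k+1) 2 (by omega) (by omega) (by omega) h htwo
      (by simp only [dd, pos]; omega)
    have f3 : C (k+3) ≠ 3 := fun h => hcon (k+3) k 3 (by omega) (by omega) (by omega) h h3
      (by simp only [dd, pos]; omega)
    omega
  -- the forced pattern
  have main : ∀ k, 2 ≤ k → k ≤ l + 3 →
      C k = (if k % 2 = 1 then 1 else if k % 4 = 2 then 3 else 2) := by
    intro k
    induction k using Nat.strong_induction_on with
    | _ k ih =>
    intro hk2 hkl
    have hbk := hb' k (by omega)
    rcases eq_or_ne k 2 with rfl | hk2'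
    · simpa using h2
    rcases eq_or_ne k 3 with rfl | hk3'
    · have e1 : C 3 ≠ 3 := fun h => hcon 3 2 3 (by omega) (by omega) (by omega) h h2
        (by simp only [dd, pos]; omega)
      have e2 : C 3 ≠ 2 := by
        intro h
        rcases h012 with ⟨ha, hbb⟩ | ⟨ha, hbb⟩
        · exact hcon 3 1 2 (by omega) (by omega) (by omega) h hbb (by simp only [dd, pos]; omega)
        · exact hcon 3 0 2 (by omega) (by omega) (by omega) h ha (by simp only [dd, pos]; omega)
      have h31 : C 3 = 1 := by omega
      simpa using h31
    have hk4 : 4 ≤ k := by omega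
    have g1 := ih (k-1) (by omega) (by omega) (by omega)
    have g2 := ih (k-2) (by omega) (by omega) (by omega)
    by_cases hpar : k % 2 = 0
    · have c1 : C (k-1) = 1 := by rw [g1]; split_ifs <;> omega
      have e1 : C k ≠ 1 := fun h => hcon k (k-1) 1 (by omega) (by omega) (by omega) h c1
        (by simp only [dd, pos]; omega)
      by_cases hm4 : k % 4 = 0
      · have c2 : C (k-2) = 3 := by rw [g2]; split_ifs <;> omega
        have e2 : C k ≠ 3 := fun h => hcon k (k-2) 3 (by omega) (by omega) (by omega) h c2
          (by simp only [dd, pos]; omega)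
        split_ifs <;> omega
      · have c2 : C (k-2) = 2 := by rw [g2]; split_ifs <;> omega
        have e2 : C k ≠ 2 := fun h => hcon k (k-2) 2 (by omega) (by omega) (by omega) h c2
          (by simp only [dd, pos]; omega)
        split_ifs <;> omega
    · by_cases hm4 : k % 4 = 1
      · have c1 : C (k-1) = 2 := by rw [g1]; split_ifs <;> omega
        have g3 := ih (k-3) (by omega) (by omega) (by omega)
        have c3 : C (k-3) = 3 := by rw [g3]; split_ifs <;> omega
        have e1 : C k ≠ 2 := fun h => hcon k (k-1) 2 (by omega) (by omega) (by omega) h c1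
          (by simp only [dd, pos]; omega)
        have e2 : C k ≠ 3 := fun h => hcon k (k-3) 3 (by omega) (by omega) (by omega) h c3
          (by simp only [dd, pos]; omega)
        split_ifs <;> omega
      · have c1 : C (k-1) = 3 := by rw [g1]; split_ifs <;> omega
        have e1 : C k ≠ 3 := fun h => hcon k (k-1) 3 (by omega) (by omega) (by omega) h c1
          (by simp only [dd, pos]; omega)
        have e2 : C k ≠ 2 := fun h => lemL (k-1) (by omega) (by omega) c1
          (by rw [show k-1+1 = k by omega]; exact h)
        split_ifs <;> omega
  -- endgame
  have hbl2 := hb' (l+2) (by omega)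
  have hbl4 := hb' (l+4) (by omega)
  have hbl5 := hb' (l+5) (by omega)
  have hend1 : C (l+3) ≠ 1 := by
    intro h
    have t1 : C (l+4) ≠ 1 := fun hh => hcon (l+4) (l+3) 1 (by omega) (by omega) (by omega) hh h
      (by simp only [dd, pos]; omega)
    have t2 : C (l+5) ≠ 1 := fun hh => hcon (l+5) (l+3) 1 (by omega) (by omega) (by omega) hh h
      (by simp only [dd, pos]; omega)
    have t3 := tne (l+4) (l+5) (by omega) (by omega) (by omega) (by simp only [dd, pos]; omega)
    have t4 : C (l+2) ≠ 1 := fun hh => hcon (l+2) (l+3) 1 (by omega) (by omega) (by omega) hh h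
      (by simp only [dd, pos]; omega)
    rcases (by omega : C (l+2) = 2 ∨ C (l+2) = 3) with hh | hh
    · rcases (by omega : C (l+4) = 2 ∨ C (l+5) = 2) with h4 | h4
      · exact hcon (l+2) (l+4) 2 (by omega) (by omega) (by omega) hh h4
          (by simp only [dd, pos]; omega)
      · exact hcon (l+2) (l+5) 2 (by omega) (by omega) (by omega) hh h4
          (by simp only [dd, pos]; omega)
    · rcases (by omega : C (l+4) = 3 ∨ C (l+5) = 3) with h4 | h4
      · exact hcon (l+2) (l+4) 3 (by omega) (by omega) (by omega) hh h4
          (by simp only [dd, pos]; omega)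
      · exact hcon (l+2) (l+5) 3 (by omega) (by omega) (by omega) hh h4
          (by simp only [dd, pos]; omega)
  have hm := main (l+3) (by omega) (by omega)
  have hl4 : l % 4 = 1 := by
    rcases (by omega : l % 2 = 0 ∨ l % 4 = 1 ∨ l % 4 = 3) with hp | hp | hp
    · exfalso; apply hend1; rw [hm]; split_ifs <;> omega
    · exact hp
    · exact absurd hp hl
  have hc3 : C (l+3) = 2 := by rw [hm]; split_ifs <;> omega
  have hc1' : C (l+1) = 3 := by
    rw [main (l+1) (by omega) (by omega)]; split_ifs <;> omega
  have t1 : C (l+4) ≠ 2 := fun hh => hcon (l+4) (l+3) 2 (by omega) (by omega) (by omega) hh hc3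
    (by simp only [dd, pos]; omega)
  have t2 : C (l+5) ≠ 2 := fun hh => hcon (l+5) (l+3) 2 (by omega) (by omega) (by omega) hh hc3
    (by simp only [dd, pos]; omega)
  have t3 := tne (l+4) (l+5) (by omega) (by omega) (by omega) (by simp only [dd, pos]; omega)
  rcases (by omega : C (l+4) = 3 ∨ C (l+5) = 3) with h4 | h4
  · exact hcon (l+4) (l+1) 3 (by omega) (by omega) (by omega) h4 hc1'
      (by simp only [dd, pos]; omega)
  · exact hcon (l+5) (l+1) 3 (by omega) (by omega) (by omega) h4 hc1'
      (by simp only [dd, pos]; omega)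

lemma no3' (l : ℕ) (hl : l % 4 ≠ 3) : ¬ ∃ c, IsPackingColoring (F1Graph l) 3 c := by
  rintro ⟨c, hb, hd⟩
  refine no3 l hl c hb ?_
  intro u v hne heq
  have := hd u v hne heq
  rw [edist_eq hne] at this
  exact_mod_cast this
def patL (j : ℕ) : ℕ := if j % 2 = 1 then 1 else if j % 4 = 0 then 2 else 3

def patR (l i : ℕ) : ℕ :=
  if i = l+5 then 1 else if i = l+4 then 2 else if i = l+3 then 3 else
  (if (l + 2 - max i 1) % 2 = 0 then 1 else if (l + 2 - max i 1) % 4 = 1 then 2 else 3)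

set_option maxHeartbeats 1000000 in
lemma patR_ok (l a b : ℕ) (ha : a < l+6) (hb : b < l+6) (hne : a ≠ b)
    (h2 : ¬(a ≤ 1 ∧ b ≤ 1)) (heq : patR l a = patR l b) : patR l a < dd l a b := by
  simp only [patR] at heq ⊢
  simp only [dd, pos]
  split_ifs at heq ⊢ <;> omega

set_option maxHeartbeats 1000000 in
lemma patL_ok (l a b : ℕ) (ha : a < l+6) (hb : b < l+6) (hne : a ≠ b)
    (h2 : ¬(l+4 ≤ a ∧ l+4 ≤ b)) (heq : patL (min a (l+4)) = patL (min b (l+4))) :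
    patL (min a (l+4)) < dd l a b := by
  simp only [patL] at heq ⊢
  simp only [dd, pos]
  split_ifs at heq ⊢ <;> omega

lemma patR_bnd (l i : ℕ) : 1 ≤ patR l i ∧ patR l i ≤ 3 := by
  simp only [patR]; split_ifs <;> omega

lemma patL_bnd (j : ℕ) : 1 ≤ patL j ∧ patL j ≤ 3 := by
  simp only [patL]; split_ifs <;> omega

lemma sep_induce {v0 : Fin (l+6)} (t : ℕ)
    (hcut : ∀ i j : Fin (l+6), (F1Graph l).Adj i j → i ≠ v0 → j ≠ v0 →
      (i.val < t ↔ j.val < t))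
    {u u' : ({v0}ᶜ : Set (Fin (l+6)))} (hne : ¬ (u.1.val < t ↔ u'.1.val < t)) (m : ℕ) :
    (m : ℕ∞) < ((F1Graph l).induce ({v0}ᶜ : Set (Fin (l+6)))).edist u u' := by
  have hsep : ∀ a b : ({v0}ᶜ : Set (Fin (l+6))),
      ((F1Graph l).induce ({v0}ᶜ : Set (Fin (l+6)))).Adj a b →
      ((a.1.val < t) ↔ (b.1.val < t)) := by
    intro a b hab
    have hadj : (F1Graph l).Adj a.1 b.1 := hab
    exact hcut _ _ hadj (Set.mem_compl_singleton_iff.mp a.2)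
      (Set.mem_compl_singleton_iff.mp b.2)
  rw [edist_top_of_sep hsep hne]
  exact (ENat.coe_ne_top m).lt_top

/-- generic cut fact: any edge of `F1Graph l` avoiding `v` stays on one side of `v`,
provided `3 ≤ v.val ≤ l+3`, with threshold `t = v.val`; and for `v.val = 2` with `t = 2`. -/
lemma cut_ok {v : Fin (l+6)} (hv3 : 2 ≤ v.val) (hvl : v.val ≤ l+3) :
    ∀ i j : Fin (l+6), (F1Graph l).Adj i j → i ≠ v → j ≠ v → (i.val < v.val ↔ j.val < v.val) := by
  intro i j hij hiv hjv
  rw [adj_iff] at hij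
  have hiv' : i.val ≠ v.val := fun h => hiv (Fin.ext h)
  have hjv' : j.val ≠ v.val := fun h => hjv (Fin.ext h)
  obtain ⟨hh, h⟩ := hij
  constructor <;> intro hlt <;> rcases h with h|h|h|h|h|h <;> omega

set_option maxHeartbeats 1000000 in
lemma partC (l : ℕ) (v : Fin (l+6)) :
    ∃ c : ({v}ᶜ : Set (Fin (l+6))) → ℕ,
      IsPackingColoring ((F1Graph l).induce ({v}ᶜ : Set (Fin (l+6)))) 3 c := by
  have hv := v.isLt
  have memne : ∀ u : ({v}ᶜ : Set (Fin (l+6))), u.1.val ≠ v.val := by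
    intro u h
    exact (Set.mem_compl_singleton_iff.mp u.2) (Fin.ext h)
  rcases lt_or_ge v.val 2 with hc1 | hge2
  · -- v ∈ {0,1}: color everything with patR
    refine ⟨fun u => patR l u.1.val, fun u => patR_bnd l u.1.val, ?_⟩
    intro u u' hne heq
    refine lt_induce_edist hne ?_
    have hvv : u.1.val ≠ u'.1.val := fun h => hne (Subtype.ext (Fin.ext h))
    have hm1 := memne u
    have hm2 := memne u'
    exact patR_ok l _ _ u.1.isLt u'.1.isLt hvv (by omega) heq
  rcases eq_or_ne v.val 2 with hc2 | hne2
  · -- v = 2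
    refine ⟨fun u => if u.1.val ≤ 1 then u.1.val + 1 else patR l u.1.val, ?_, ?_⟩
    · intro u
      rcases patR_bnd l u.1.val with ⟨x1, x2⟩
      dsimp only
      split_ifs <;> omega
    · intro u u' hne heq
      have hvv : u.1.val ≠ u'.1.val := fun h => hne (Subtype.ext (Fin.ext h))
      by_cases ha : u.1.val < 2 <;> by_cases hb : u'.1.val < 2
      · refine lt_induce_edist hne ?_
        have e1 : u.1.val ≤ 1 := by omega
        have e2 : u'.1.val ≤ 1 := by omega
        simp only [if_pos e1, if_pos e2] at heq
        exact absurd heq (by omega)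
      · refine sep_induce 2 (hc2 ▸ cut_ok (by omega) (by omega)) (fun hiff => hb (hiff.mp ha)) _
      · refine sep_induce 2 (hc2 ▸ cut_ok (by omega) (by omega)) (fun hiff => ha (hiff.mpr hb)) _
      · refine lt_induce_edist hne ?_
        have e1 : ¬ u.1.val ≤ 1 := by omega
        have e2 : ¬ u'.1.val ≤ 1 := by omega
        simp only [if_neg e1, if_neg e2] at heq ⊢
        exact patR_ok l _ _ u.1.isLt u'.1.isLt hvv (by omega) heq
  rcases lt_or_ge v.val (l+3) with hc3 | hge3
  · -- 3 ≤ v ≤ l+2 : left patL, right patR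
    refine ⟨fun u => if u.1.val < v.val then patL (min u.1.val (l+4)) else patR l u.1.val,
      ?_, ?_⟩
    · intro u
      rcases patR_bnd l u.1.val with ⟨x1, x2⟩
      rcases patL_bnd (min u.1.val (l+4)) with ⟨y1, y2⟩
      dsimp only
      split_ifs <;> omega
    · intro u u' hne heq
      have hvv : u.1.val ≠ u'.1.val := fun h => hne (Subtype.ext (Fin.ext h))
      have hm1 := memne u
      have hm2 := memne u'
      by_cases ha : u.1.val < v.val <;> by_cases hb : u'.1.val < v.val
      · refine lt_induce_edist hne ?_
        simp only [if_pos ha, if_pos hb] at heq ⊢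
        exact patL_ok l _ _ u.1.isLt u'.1.isLt hvv (by omega) heq
      · exact sep_induce v.val (cut_ok (by omega) (by omega)) (fun hiff => hb (hiff.mp ha)) _
      · exact sep_induce v.val (cut_ok (by omega) (by omega)) (fun hiff => ha (hiff.mpr hb)) _
      · refine lt_induce_edist hne ?_
        simp only [if_neg ha, if_neg hb] at heq ⊢
        exact patR_ok l _ _ u.1.isLt u'.1.isLt hvv (by omega) heq
  rcases eq_or_ne v.val (l+3) with hc4 | hne4
  · -- v = l+3 : left patL, right {l+4 ↦ 1, l+5 ↦ 2}
    refine ⟨fun u => if u.1.val < l+3 then patL (min u.1.val (l+4))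
        else (if u.1.val = l+4 then 1 else 2), ?_, ?_⟩
    · intro u
      rcases patL_bnd (min u.1.val (l+4)) with ⟨y1, y2⟩
      dsimp only
      split_ifs <;> omega
    · intro u u' hne heq
      have hvv : u.1.val ≠ u'.1.val := fun h => hne (Subtype.ext (Fin.ext h))
      have hm1 := memne u
      have hm2 := memne u'
      have hu := u.1.isLt
      have hu' := u'.1.isLt
      by_cases ha : u.1.val < l+3 <;> by_cases hb : u'.1.val < l+3
      · refine lt_induce_edist hne ?_
        simp only [if_pos ha, if_pos hb] at heq ⊢
        exact patL_ok l _ _ u.1.isLt u'.1.isLt hvv (by omega) heq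
      · exact sep_induce (l+3) (hc4 ▸ cut_ok (by omega) (by omega))
          (fun hiff => hb (hiff.mp ha)) _
      · exact sep_induce (l+3) (hc4 ▸ cut_ok (by omega) (by omega))
          (fun hiff => ha (hiff.mpr hb)) _
      · exfalso
        simp only [if_neg ha, if_neg hb] at heq
        split_ifs at heq <;> omega
  · -- v ∈ {l+4, l+5}
    refine ⟨fun u => patL (min u.1.val (l+4)), fun u => patL_bnd _, ?_⟩
    intro u u' hne heq
    refine lt_induce_edist hne ?_
    have hvv : u.1.val ≠ u'.1.val := fun h => hne (Subtype.ext (Fin.ext h))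
    have hm1 := memne u
    have hm2 := memne u'
    have hu := u.1.isLt
    have hu' := u'.1.isLt
    exact patL_ok l _ _ u.1.isLt u'.1.isLt hvv (by omega) heq
end F1Aux

theorem F1_fourVertexCritical (l : ℕ) (hl : l % 4 ≠ 3) :
    FourVertexCritical (F1Graph l) := by
  constructor
  · -- χρ = 4
    have h4 : (4:ℕ) ∈ {k | ∃ c : Fin (l+6) → ℕ, IsPackingColoring (F1Graph l) k c} :=
      F1Aux.exists4 l
    have hle : sInf {k | ∃ c : Fin (l+6) → ℕ, IsPackingColoring (F1Graph l) k c} ≤ 4 :=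
      Nat.sInf_le h4
    have hmem := Nat.sInf_mem (⟨4, h4⟩ :
      Set.Nonempty {k | ∃ c : Fin (l+6) → ℕ, IsPackingColoring (F1Graph l) k c})
    rw [show packingChromaticNumber (F1Graph l)
      = sInf {k | ∃ c : Fin (l+6) → ℕ, IsPackingColoring (F1Graph l) k c} from rfl]
    by_contra hne
    have hlt : sInf {k | ∃ c : Fin (l+6) → ℕ, IsPackingColoring (F1Graph l) k c} ≤ 3 := by
      omega
    obtain ⟨c, hc1, hc2⟩ := hmem
    exact F1Aux.no3' l hl ⟨c, fun w => ⟨(hc1 w).1, le_trans (hc1 w).2 hlt⟩, hc2⟩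
  · intro v
    obtain ⟨c, hc⟩ := F1Aux.partC l v
    have hle : packingChromaticNumber ((F1Graph l).induce ({v}ᶜ : Set (Fin (l+6)))) ≤ 3 :=
      Nat.sInf_le ⟨c, hc⟩
    omega
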